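/- Let 2^K < m ≤ 2^{K+1}. The product ∏_{j=1}^{m-1} ∏_{i=1}^{j} (2n+i+j)/(i+j) is an odd integer if and only if n ≡ 0 (mod 2^{K+1}) or n ≡ -m (mod 2^{K+1}); otherwise it is an even integer. -/

import Mathlib

set_option maxHeartbeats 1000000
open Finset

def tri (L : ℕ) : Finset ((_ : ℕ) × ℕ) := (Finset.Icc 1 L).sigma fun j => Finset.Icc 1 j

lemma mem_tri {L : ℕ} {x : (_ : ℕ) × ℕ} : x ∈ tri L ↔ 1 ≤ x.2 ∧ x.2 ≤ x.1 ∧ x.1 ≤ L := by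
  obtain ⟨j, i⟩ := x
  simp only [tri, Finset.mem_sigma, Finset.mem_Icc]
  omega

def dcnt (L q n : ℕ) : ℕ := ((tri L).filter fun x => q ∣ 2 * n + x.2 + x.1).card

lemma eq_of_dvd_between {q u : ℕ} (h : q ∣ u) (h1 : 0 < u) (h2 : u < 2 * q) : u = q := by
  obtain ⟨k, rfl⟩ := h
  match k with
  | 0 => omega
  | 1 => omega
  | (k+2) =>
    exfalso
    have : q * 2 ≤ q * (k + 2) := Nat.mul_le_mul_left q (by omega)
    omega

lemma dvd_window_eq {q u v : ℕ} (h : q ∣ u) (h' : q ∣ v) (h1 : u < v + q) (h2 : v < u + q) :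
    u = v := by
  obtain ⟨k, rfl⟩ := h
  obtain ⟨k', rfl⟩ := h'
  have hk : k < k' + 1 := Nat.lt_of_mul_lt_mul_left
    (show q * k < q * (k' + 1) by rw [Nat.mul_succ]; omega)
  have hk' : k' < k + 1 := Nat.lt_of_mul_lt_mul_left
    (show q * k' < q * (k + 1) by rw [Nat.mul_succ]; omega)
  have : k = k' := by omega
  rw [this]

/-- number of pairs (i,j), 1 ≤ i ≤ j ≤ L with i + j = s -/
def rho (L s : ℕ) : ℕ := s / 2 + 1 - max 1 (s - L)

lemma rho_card (L s : ℕ) :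
    (((tri L).filter fun x => x.2 + x.1 = s)).card = rho L s := by
  have : (((tri L).filter fun x => x.2 + x.1 = s)).card
      = (Finset.Icc (max 1 (s - L)) (s / 2)).card := by
    apply Finset.card_nbij' (fun x => x.2) (fun i => ⟨s - i, i⟩)
    · intro x hx
      simp only [Finset.mem_coe, Finset.mem_filter, mem_tri] at hx
      simp only [Finset.mem_coe, Finset.mem_Icc]
      omega
    · intro i hi
      simp only [Finset.mem_coe, Finset.mem_Icc] at hi
      simp only [Finset.mem_coe, Finset.mem_filter, mem_tri]
      omega
    · intro x hx
      simp only [Finset.mem_coe, Finset.mem_filter, mem_tri] at hx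
      obtain ⟨j, i⟩ := x
      simp only at hx ⊢
      have : s - i = j := by omega
      simp [this]
    · intro i hi
      simp
  rw [this, Nat.card_Icc, rho]

/-- the residue extraction lemma -/
lemma residue (q x : ℕ) (hq : 0 < q) :
    ∃ r, r < q ∧ (2 ∣ q → 2 ∣ r) ∧ (q ∣ 2 * x → r = 0) ∧
      ∀ s, (q ∣ 2 * x + s ↔ s % q = r) := by
  set a := 2 * x % q with ha
  have haq : a < q := Nat.mod_lt _ hq
  have hxa : 2 * x % q ≡ 2 * x [MOD q] := Nat.mod_modEq _ _
  have key : ∀ s, (q ∣ 2 * x + s ↔ q ∣ a + s) := by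
    intro s
    rw [← Nat.modEq_zero_iff_dvd, ← Nat.modEq_zero_iff_dvd]
    constructor
    · intro h; exact (hxa.add_right s).trans h
    · intro h; exact ((hxa.symm).add_right s).trans h
  by_cases h0 : a = 0
  · refine ⟨0, hq, fun _ => dvd_zero 2, fun _ => rfl, fun s => ?_⟩
    rw [key s, h0, zero_add, Nat.dvd_iff_mod_eq_zero]
  · refine ⟨q - a, by omega, ?_, ?_, ?_⟩
    · intro h2
      have : 2 ∣ a := (Nat.dvd_mod_iff h2).2 ⟨x, rfl⟩
      omega
    · intro hdvd
      exact absurd (Nat.dvd_iff_mod_eq_zero.1 hdvd) h0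
    · intro s
      rw [key s]
      constructor
      · intro hdvd
        have h1 : q ∣ a + s % q := by
          have : a + s % q ≡ a + s [MOD q] := (Nat.mod_modEq s q).add_left a
          rw [← Nat.modEq_zero_iff_dvd] at hdvd ⊢
          exact this.trans hdvd
        have h2 : a + s % q = q := by
          apply eq_of_dvd_between h1 (by omega)
          have := Nat.mod_lt s hq
          omega
        omega
      · intro hr
        have h1 : q ∣ a + s % q := by rw [hr]; exact ⟨1, by omega⟩
        have : a + s % q ≡ a + s [MOD q] := (Nat.mod_modEq s q).add_left a
        rw [← Nat.modEq_zero_iff_dvd] at h1 ⊢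
        exact this.symm.trans h1

lemma mod3 {q r s : ℕ} (hq : 0 < q) (hr : r < q) (hs : s ≤ 2 * q) (h : s % q = r) :
    s = r ∨ s = r + q ∨ s = r + 2 * q := by
  have hd := Nat.div_add_mod s q
  have hk2 : s / q ≤ 2 := by
    rcases Nat.lt_or_ge (s / q) 3 with h' | h'
    · omega
    · exfalso
      have h3 : q * 3 ≤ q * (s / q) := Nat.mul_le_mul_left q h'
      omega
  generalize hgen : s / q = k at hd hk2
  have : k = 0 ∨ k = 1 ∨ k = 2 := by omega
  rcases this with h' | h' | h' <;> rw [h'] at hd <;> omega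

lemma mod3' {q r s : ℕ} (hr : r < q) (h : s = r ∨ s = r + q ∨ s = r + 2 * q) :
    s % q = r := by
  rcases h with rfl | rfl | rfl
  · exact Nat.mod_eq_of_lt hr
  · rw [Nat.add_mod_right]; exact Nat.mod_eq_of_lt hr
  · rw [show r + 2 * q = r + q + q by ring, Nat.add_mod_right, Nat.add_mod_right]
    exact Nat.mod_eq_of_lt hr

lemma dcnt_eq_rho (M q x : ℕ) (hq : 0 < q) (hM : M ≤ q) :
    ∃ r, r < q ∧ (2 ∣ q → 2 ∣ r) ∧ (q ∣ 2 * x → r = 0) ∧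
      dcnt M q x = rho M r + rho M (r + q) + rho M (r + 2 * q) := by
  obtain ⟨r, hr, hpar, hzero, hiff⟩ := residue q x hq
  refine ⟨r, hr, hpar, hzero, ?_⟩
  unfold dcnt
  have hcong : ((tri M).filter fun x' => q ∣ 2 * x + x'.2 + x'.1)
      = (tri M).filter fun x' => (x'.2 + x'.1) % q = r := by
    apply Finset.filter_congr
    intro x' _
    rw [show 2 * x + x'.2 + x'.1 = 2 * x + (x'.2 + x'.1) by ring]
    simp only [hiff (x'.2 + x'.1)]
  rw [hcong]
  have hsplit : ((tri M).filter fun x' => (x'.2 + x'.1) % q = r)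
      = (((tri M).filter fun x' => x'.2 + x'.1 = r) ∪
          ((tri M).filter fun x' => x'.2 + x'.1 = r + q)) ∪
          ((tri M).filter fun x' => x'.2 + x'.1 = r + 2 * q) := by
    ext x'
    simp only [Finset.mem_union, Finset.mem_filter, mem_tri]
    constructor
    · rintro ⟨hm, hmod⟩
      rcases mod3 hq hr (by omega) hmod with h | h | h <;> tauto
    · rintro ((⟨hm, he⟩ | ⟨hm, he⟩) | ⟨hm, he⟩) <;>
        exact ⟨hm, mod3' hr (by tauto)⟩
  rw [hsplit]
  rw [Finset.card_union_of_disjoint, Finset.card_union_of_disjoint]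
  · rw [rho_card, rho_card, rho_card]
  · simp only [Finset.disjoint_left, Finset.mem_filter, mem_tri]
    rintro a ⟨h1, h2⟩ ⟨h3, h4⟩
    omega
  · simp only [Finset.disjoint_left, Finset.mem_union, Finset.mem_filter, mem_tri]
    rintro a (⟨h1, h2⟩ | ⟨h1, h2⟩) ⟨h3, h4⟩ <;> omega

lemma leaf_le (L q r : ℕ) (hq : 0 < q) (hL : L ≤ q) (hr : r < q) (hpar : 2 ∣ q → 2 ∣ r) :
    rho L 0 + rho L q + rho L (2 * q) ≤ rho L r + rho L (r + q) + rho L (r + 2 * q) := by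
  unfold rho
  obtain ⟨d, hd | hd⟩ := Nat.even_or_odd' q <;> obtain ⟨c, hc | hc⟩ := Nat.even_or_odd' r <;>
      subst hd hc
  · rw [show (0:ℕ)/2 = 0 from rfl, show 2*d/2 = d by omega, show 2*(2*d)/2 = 2*d by omega,
      show 2*c/2 = c by omega, show (2*c+2*d)/2 = c+d by omega,
      show (2*c+2*(2*d))/2 = c+2*d by omega]
    omega
  · exact absurd (hpar ⟨d, rfl⟩) (by omega)
  · rw [show (0:ℕ)/2 = 0 from rfl, show (2*d+1)/2 = d by omega,
      show 2*(2*d+1)/2 = 2*d+1 by omega, show 2*c/2 = c by omega,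
      show (2*c+(2*d+1))/2 = c+d by omega, show (2*c+2*(2*d+1))/2 = c+2*d+1 by omega]
    omega
  · rw [show (0:ℕ)/2 = 0 from rfl, show (2*d+1)/2 = d by omega,
      show 2*(2*d+1)/2 = 2*d+1 by omega, show (2*c+1)/2 = c by omega,
      show (2*c+1+(2*d+1))/2 = c+d+1 by omega, show (2*c+1+2*(2*d+1))/2 = c+2*d+1 by omega]
    omega

lemma leaf_const (q r r' : ℕ) (hq : 0 < q) (hr : r < q) (hr' : r' < q)
    (hpar : 2 ∣ q → 2 ∣ r) (hpar' : 2 ∣ q → 2 ∣ r') :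
    rho q r + rho q (r + q) + rho q (r + 2 * q) =
      rho q r' + rho q (r' + q) + rho q (r' + 2 * q) := by
  have key : ∀ u, u < q → (2 ∣ q → 2 ∣ u) →
      rho q u + rho q (u + q) + rho q (u + 2 * q) =
        rho q 0 + rho q q + rho q (2 * q) := by
    intro u hu hup
    unfold rho
    obtain ⟨d, hd | hd⟩ := Nat.even_or_odd' q <;> obtain ⟨c, hc | hc⟩ := Nat.even_or_odd' u <;>
        subst hd hc
    · rw [show (0:ℕ)/2 = 0 from rfl, show 2*d/2 = d by omega, show 2*(2*d)/2 = 2*d by omega,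
        show 2*c/2 = c by omega, show (2*c+2*d)/2 = c+d by omega,
        show (2*c+2*(2*d))/2 = c+2*d by omega]
      omega
    · exact absurd (hup ⟨d, rfl⟩) (by omega)
    · rw [show (0:ℕ)/2 = 0 from rfl, show (2*d+1)/2 = d by omega,
        show 2*(2*d+1)/2 = 2*d+1 by omega, show 2*c/2 = c by omega,
        show (2*c+(2*d+1))/2 = c+d by omega, show (2*c+2*(2*d+1))/2 = c+2*d+1 by omega]
      omega
    · rw [show (0:ℕ)/2 = 0 from rfl, show (2*d+1)/2 = d by omega,
        show 2*(2*d+1)/2 = 2*d+1 by omega, show (2*c+1)/2 = c by omega,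
        show (2*c+1+(2*d+1))/2 = c+d+1 by omega, show (2*c+1+2*(2*d+1))/2 = c+2*d+1 by omega]
      omega
  rw [key r hr hpar, key r' hr' hpar']

lemma Tconst (q x y : ℕ) (hq : 0 < q) : dcnt q q x = dcnt q q y := by
  obtain ⟨r, hr, hp, _, he⟩ := dcnt_eq_rho q q x hq le_rfl
  obtain ⟨r', hr', hp', _, he'⟩ := dcnt_eq_rho q q y hq le_rfl
  rw [he, he', leaf_const q r r' hq hr hr' hp hp']

lemma base_le (L q n : ℕ) (hq : 0 < q) (hL : L ≤ q) : dcnt L q 0 ≤ dcnt L q n := by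
  obtain ⟨r0, hr0, _, hz, he0⟩ := dcnt_eq_rho L q 0 hq hL
  obtain ⟨r, hr, hp, _, he⟩ := dcnt_eq_rho L q n hq hL
  have : r0 = 0 := hz (by simp)
  rw [he0, he, this]
  simpa using leaf_le L q r hq hL hr hp

lemma window (q c A : ℕ) (hq : 0 < q) :
    ((Finset.Ioc A (A + q)).filter fun j => q ∣ c + j).card = 1 := by
  rw [Finset.card_eq_one]
  have hv := Nat.div_add_mod (c + A) q
  have hvlt : (c + A) % q < q := Nat.mod_lt _ hq
  generalize hu : (c + A) / q = u at hv
  generalize hvv : (c + A) % q = v at hv hvlt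
  have hdvd : q ∣ c + (A + q - v) := ⟨u + 1, by rw [Nat.mul_succ]; omega⟩
  refine ⟨A + q - v, ?_⟩
  ext j
  simp only [Finset.mem_filter, Finset.mem_Ioc, Finset.mem_singleton]
  constructor
  · rintro ⟨⟨hj1, hj2⟩, hdj⟩
    have heq : c + j = c + (A + q - v) := dvd_window_eq hdj hdvd (by omega) (by omega)
    omega
  · rintro rfl
    exact ⟨⟨by omega, by omega⟩, hdvd⟩

lemma strip (L q n : ℕ) (hq : 0 < q) :
    dcnt (L + q) q n = dcnt L q n + L + dcnt q q (n + L) := by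
  classical
  set P : (_ : ℕ) × ℕ → Prop := fun x => q ∣ 2 * n + x.2 + x.1 with hP
  have hunion : (tri (L + q)).filter P
      = ((tri L).filter P ∪ (tri (L + q)).filter (fun x => P x ∧ L < x.1 ∧ x.2 ≤ L))
          ∪ (tri (L + q)).filter (fun x => P x ∧ L < x.2) := by
    ext x
    simp only [Finset.mem_union, Finset.mem_filter, mem_tri]
    constructor
    · rintro ⟨hm, hp⟩
      rcases le_or_gt x.1 L with h | h
      · exact Or.inl (Or.inl ⟨⟨hm.1, hm.2.1, h⟩, hp⟩)
      · rcases le_or_gt x.2 L with h2 | h2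
        · exact Or.inl (Or.inr ⟨⟨hm.1, hm.2.1, hm.2.2⟩, hp, h, h2⟩)
        · exact Or.inr ⟨⟨hm.1, hm.2.1, hm.2.2⟩, hp, h2⟩
    · rintro ((⟨hm, hp⟩ | ⟨hm, hp, _⟩) | ⟨hm, hp, _⟩)
      · exact ⟨⟨hm.1, hm.2.1, by omega⟩, hp⟩
      · exact ⟨hm, hp⟩
      · exact ⟨hm, hp⟩
  have hcard : ((tri (L + q)).filter P).card
      = ((tri L).filter P).card + ((tri (L + q)).filter (fun x => P x ∧ L < x.1 ∧ x.2 ≤ L)).card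
        + ((tri (L + q)).filter (fun x => P x ∧ L < x.2)).card := by
    rw [hunion, Finset.card_union_of_disjoint, Finset.card_union_of_disjoint]
    · simp only [Finset.disjoint_left, Finset.mem_filter, mem_tri]
      rintro a ⟨h1, _⟩ ⟨_, _, h2⟩
      omega
    · simp only [Finset.disjoint_left, Finset.mem_union, Finset.mem_filter, mem_tri]
      rintro a (⟨h1, _⟩ | ⟨_, _, _, h2⟩) ⟨_, _, h3⟩ <;> omega
  have part2 : ((tri (L + q)).filter (fun x => P x ∧ L < x.1 ∧ x.2 ≤ L)).card = L := by
    rw [Finset.card_eq_sum_card_fiberwise (f := fun x => x.2) (t := Finset.Icc 1 L)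
      (by intro x hx
          simp only [Finset.mem_coe, Finset.mem_filter, mem_tri] at hx
          simp only [Finset.mem_coe, Finset.mem_Icc]
          omega)]
    have hone : ∀ i ∈ Finset.Icc 1 L,
        (((tri (L + q)).filter (fun x => P x ∧ L < x.1 ∧ x.2 ≤ L)).filter
          fun x => x.2 = i).card = 1 := by
      intro i hi
      simp only [Finset.mem_Icc] at hi
      have heq : (((tri (L + q)).filter (fun x => P x ∧ L < x.1 ∧ x.2 ≤ L)).filter
          fun x => x.2 = i).card
          = ((Finset.Ioc L (L + q)).filter fun j => q ∣ (2 * n + i) + j).card := by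
        apply Finset.card_nbij' (fun x => x.1) (fun j => ⟨j, i⟩)
        · intro x hx
          simp only [Finset.mem_coe, Finset.mem_filter, mem_tri, hP] at hx
          simp only [Finset.mem_coe, Finset.mem_filter, Finset.mem_Ioc]
          obtain ⟨⟨hm, hp, h1, h2⟩, h3⟩ := hx
          refine ⟨⟨by omega, by omega⟩, ?_⟩
          rw [show 2 * n + i + x.1 = 2 * n + x.2 + x.1 by omega]
          exact hp
        · intro j hj
          simp only [Finset.mem_coe, Finset.mem_filter, Finset.mem_Ioc] at hj
          refine Finset.mem_filter.2 ⟨Finset.mem_filter.2 ⟨mem_tri.2 ?_, ?_, ?_, ?_⟩, ?_⟩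
          · show 1 ≤ i ∧ i ≤ j ∧ j ≤ L + q
            omega
          · show q ∣ 2 * n + i + j
            exact hj.2
          · show L < j
            omega
          · show i ≤ L
            omega
          · show i = i
            rfl
        · intro x hx
          simp only [Finset.mem_coe, Finset.mem_filter, mem_tri] at hx
          obtain ⟨j, i'⟩ := x
          obtain ⟨⟨hm, hp, h1, h2⟩, h3⟩ := hx
          simp only at h3 ⊢
          rw [h3]
        · intro j hj
          rfl
      rw [heq, window q (2 * n + i) L hq]
    rw [Finset.sum_congr rfl hone]
    simp [Nat.card_Icc]
  have part3 : ((tri (L + q)).filter (fun x => P x ∧ L < x.2)).card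
      = ((tri q).filter fun x => q ∣ 2 * (n + L) + x.2 + x.1).card := by
    apply Finset.card_nbij' (fun x => ⟨x.1 - L, x.2 - L⟩) (fun y => ⟨y.1 + L, y.2 + L⟩)
    · intro x hx
      simp only [Finset.mem_coe, Finset.mem_filter, mem_tri, hP] at hx
      obtain ⟨hm, hp, h2⟩ := hx
      simp only [Finset.mem_coe, Finset.mem_filter, mem_tri]
      refine ⟨by omega, ?_⟩
      rw [show 2 * (n + L) + (x.2 - L) + (x.1 - L) = 2 * n + x.2 + x.1 by omega]
      exact hp
    · intro y hy
      simp only [Finset.mem_coe, Finset.mem_filter, mem_tri] at hy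
      obtain ⟨hm, hp⟩ := hy
      simp only [Finset.mem_coe, Finset.mem_filter, mem_tri, hP]
      refine ⟨by omega, ?_, by omega⟩
      rw [show 2 * n + (y.2 + L) + (y.1 + L) = 2 * (n + L) + y.2 + y.1 by omega]
      exact hp
    · intro x hx
      simp only [Finset.mem_coe, Finset.mem_filter, mem_tri] at hx
      obtain ⟨j, i⟩ := x
      obtain ⟨hm, hp, h2⟩ := hx
      simp only at h2 hm ⊢
      have e1 : j - L + L = j := by omega
      have e2 : i - L + L = i := by omega
      rw [e1, e2]
    · intro y hy
      obtain ⟨j, i⟩ := y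
      show (⟨j + L - L, i + L - L⟩ : (_ : ℕ) × ℕ) = ⟨j, i⟩
      have e1 : j + L - L = j := by omega
      have e2 : i + L - L = i := by omega
      rw [e1, e2]
  show ((tri (L + q)).filter P).card = ((tri L).filter P).card + L
      + ((tri q).filter fun x => q ∣ 2 * (n + L) + x.2 + x.1).card
  omega

lemma key_le (q n : ℕ) (hq : 0 < q) : ∀ L, dcnt L q 0 ≤ dcnt L q n := by
  intro L
  induction L using Nat.strong_induction_on with
  | _ L IH =>
    rcases le_or_gt L q with hL | hL
    · exact base_le L q n hq hL
    · have hL' : L = (L - q) + q := by omega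
      rw [hL', strip (L - q) q 0 hq, strip (L - q) q n hq]
      have h1 := IH (L - q) (by omega)
      have h2 : dcnt q q (0 + (L - q)) = dcnt q q (n + (L - q)) := Tconst _ _ _ hq
      omega

lemma dcnt_eq_zero {L q n : ℕ} (h : 2 * n + 2 * L < q) : dcnt L q n = 0 := by
  unfold dcnt
  rw [Finset.card_eq_zero, Finset.filter_eq_empty_iff]
  intro x hx
  rw [mem_tri] at hx
  intro hdvd
  have h2 : 0 < 2 * n + x.2 + x.1 := by omega
  have := Nat.le_of_dvd h2 hdvd
  omega

lemma dcnt_congr_of_dvd {L q n : ℕ} (h : q ∣ 2 * n) : dcnt L q n = dcnt L q 0 := by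
  unfold dcnt
  congr 1
  apply Finset.filter_congr
  intro x _
  rw [show 2 * n + x.2 + x.1 = 2 * n + (x.2 + x.1) by ring,
    show 2 * 0 + x.2 + x.1 = x.2 + x.1 by ring]
  simp only [Nat.dvd_add_right h]

lemma dcnt_reflect {m q n : ℕ} (hm : 1 ≤ m) (h : q ∣ 2 * n + 2 * m) :
    dcnt (m - 1) q n = dcnt (m - 1) q 0 := by
  unfold dcnt
  apply Finset.card_nbij' (fun x => ⟨m - x.2, m - x.1⟩) (fun y => ⟨m - y.2, m - y.1⟩)
  · intro x hx
    simp only [Finset.mem_coe, Finset.mem_filter, mem_tri] at hx ⊢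
    obtain ⟨hmem, hdvd⟩ := hx
    refine ⟨by omega, ?_⟩
    have h5 : q ∣ (2 * n + 2 * m) - (2 * n + x.2 + x.1) := Nat.dvd_sub h hdvd
    rw [show (2 * n + 2 * m) - (2 * n + x.2 + x.1) = 2 * 0 + (m - x.1) + (m - x.2) by omega] at h5
    exact h5
  · intro y hy
    simp only [Finset.mem_coe, Finset.mem_filter, mem_tri] at hy ⊢
    obtain ⟨hmem, hdvd⟩ := hy
    refine ⟨by omega, ?_⟩
    have h6 : q ∣ (2 * n + 2 * m) - (2 * 0 + y.2 + y.1) := Nat.dvd_sub h hdvd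
    rw [show (2 * n + 2 * m) - (2 * 0 + y.2 + y.1) = 2 * n + (m - y.1) + (m - y.2) by omega] at h6
    exact h6
  · intro x hx
    simp only [Finset.mem_coe, Finset.mem_filter, mem_tri] at hx
    obtain ⟨j, i⟩ := x
    obtain ⟨hmem, _⟩ := hx
    simp only at hmem ⊢
    show (⟨m - (m - j), m - (m - i)⟩ : (_ : ℕ) × ℕ) = ⟨j, i⟩
    have f1 : m - (m - i) = i := by omega
    have f2 : m - (m - j) = j := by omega
    rw [f1, f2]
  · intro y hy
    simp only [Finset.mem_coe, Finset.mem_filter, mem_tri] at hy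
    obtain ⟨j, i⟩ := y
    obtain ⟨hmem, _⟩ := hy
    simp only at hmem ⊢
    show (⟨m - (m - j), m - (m - i)⟩ : (_ : ℕ) × ℕ) = ⟨j, i⟩
    have f1 : m - (m - i) = i := by omega
    have f2 : m - (m - j) = j := by omega
    rw [f1, f2]

lemma vanish_high {m K n e : ℕ} (h1 : 2 ^ K < m) (h2 : m ≤ 2 ^ (K + 1)) (he : K + 2 ≤ e)
    (hcase : 2 ^ (K + 2) ∣ 2 * n ∨ 2 ^ (K + 2) ∣ 2 * n + 2 * m) :
    dcnt (m - 1) (2 ^ e) n = 0 := by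
  have hpow : (2 : ℕ) ^ (K + 2) = 2 * 2 ^ (K + 1) := by rw [pow_succ]; ring
  unfold dcnt
  rw [Finset.card_eq_zero, Finset.filter_eq_empty_iff]
  intro x hx
  rw [mem_tri] at hx
  intro hdvd
  have h4 : 2 ^ (K + 2) ∣ 2 * n + x.2 + x.1 := dvd_trans (pow_dvd_pow 2 he) hdvd
  rcases hcase with hc | hc
  · have h5 : 2 ^ (K + 2) ∣ (2 * n + x.2 + x.1) - (2 * n) := Nat.dvd_sub h4 hc
    rw [show (2 * n + x.2 + x.1) - (2 * n) = x.2 + x.1 by omega] at h5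
    have h6 := Nat.le_of_dvd (by omega) h5
    omega
  · have h5 : 2 ^ (K + 2) ∣ (2 * n + 2 * m) - (2 * n + x.2 + x.1) := Nat.dvd_sub hc h4
    have h7 : x.2 + x.1 ≤ 2 * m - 2 := by omega
    have h6 := Nat.le_of_dvd (show 0 < (2 * n + 2 * m) - (2 * n + x.2 + x.1) by omega) h5
    omega

lemma neces {K m n : ℕ} (h1 : 2 ^ K < m) (h2 : m ≤ 2 ^ (K + 1))
    (ha : n % 2 ^ (K + 1) ≠ 0) (hb : (n + m) % 2 ^ (K + 1) ≠ 0) :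
    ∃ e, 1 ≤ e ∧ dcnt (m - 1) (2 ^ e) 0 < dcnt (m - 1) (2 ^ e) n := by
  set q := 2 ^ (K + 1) with hqdef
  set Q := 2 ^ K with hQdef
  have hqQ : q = 2 * Q := by rw [hqdef, hQdef, pow_succ]; ring
  have hq0 : 0 < q := Nat.pow_pos (by norm_num)
  have hdm := Nat.div_add_mod n q
  set a := n % q with hadef
  have haq : a < q := Nat.mod_lt _ hq0
  generalize hc : n / q = c at hdm
  have hab : (a + m) % q ≠ 0 := by
    have hme : (a + m) % q = (n + m) % q := (Nat.mod_modEq n q).add_right m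
    rw [hme]; exact hb
  have ha' : a ≠ 0 := ha
  have hL : m - 1 ≤ q := by omega
  rcases lt_trichotomy (a + m) q with hcase | hcase | hcase
  · -- low case : use e = K + 1
    refine ⟨K + 1, by omega, ?_⟩
    rw [← hqdef]
    have haQ : a < Q := by omega
    set s₀ := q - 2 * a with hs₀
    -- upper bound for dcnt (m-1) q 0
    have hupper : dcnt (m - 1) q 0 ≤ (Finset.Icc (q - m + 1) Q).card := by
      unfold dcnt
      apply Finset.card_le_card_of_injOn (fun x => x.2)
      · intro x hx
        simp only [Finset.mem_coe, Finset.mem_filter, mem_tri] at hx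
        obtain ⟨hmem, hdvd⟩ := hx
        have hsum : 2 * 0 + x.2 + x.1 = q := by
          apply eq_of_dvd_between hdvd (by omega) (by omega)
        simp only [Finset.mem_coe, Finset.mem_Icc]
        omega
      · intro x hx y hy hxy
        simp only [Finset.coe_filter, Set.mem_setOf_eq, mem_tri] at hx hy
        obtain ⟨hmx, hdx⟩ := hx
        obtain ⟨hmy, hdy⟩ := hy
        have hsx : 2 * 0 + x.2 + x.1 = q := eq_of_dvd_between hdx (by omega) (by omega)
        have hsy : 2 * 0 + y.2 + y.1 = q := eq_of_dvd_between hdy (by omega) (by omega)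
        obtain ⟨j, i⟩ := x
        obtain ⟨j', i'⟩ := y
        simp only at hxy hsx hsy ⊢
        have : j = j' := by omega
        simp [this, hxy]
    -- lower bound for dcnt (m-1) q n
    have hlower : (Finset.Icc (max 1 (s₀ - (m - 1))) (Q - a)).card ≤ dcnt (m - 1) q n := by
      unfold dcnt
      apply Finset.card_le_card_of_injOn (fun i => ⟨s₀ - i, i⟩)
      · intro i hi
        simp only [Finset.mem_coe, Finset.mem_Icc] at hi
        simp only [Finset.mem_coe, Finset.mem_filter, mem_tri]
        constructor
        · omega
        · show q ∣ 2 * n + i + (s₀ - i)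
          rw [show 2 * n + i + (s₀ - i) = 2 * n + s₀ by omega]
          refine ⟨2 * c + 1, ?_⟩
          rw [show q * (2 * c + 1) = 2 * (q * c) + q by ring]
          omega
      · intro i hi i' hi' hii
        have := congrArg (fun z => z.2) hii
        simpa using this
    have hicc1 : (Finset.Icc (q - m + 1) Q).card = Q + 1 - (q - m + 1) := Nat.card_Icc _ _
    have hicc2 : (Finset.Icc (max 1 (s₀ - (m - 1))) (Q - a)).card
        = Q - a + 1 - max 1 (s₀ - (m - 1)) := Nat.card_Icc _ _
    omega
  · exact absurd (by rw [hcase, Nat.mod_self]) hab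
  · -- high case : use e = K + 2
    refine ⟨K + 2, by omega, ?_⟩
    have hq2 : (2 : ℕ) ^ (K + 2) = 2 * q := by rw [hqdef, pow_succ]; ring
    have hzero : dcnt (m - 1) (2 ^ (K + 2)) 0 = 0 := by
      apply dcnt_eq_zero
      rw [hq2]; omega
    rw [hzero]
    set s₀ := 2 * q - 2 * a with hs₀
    set i₀ := max 1 (s₀ - (m - 1)) with hi₀
    have hs₀b : 2 ≤ s₀ ∧ s₀ ≤ 2 * (m - 1) := by omega
    have hmem : (⟨s₀ - i₀, i₀⟩ : (_ : ℕ) × ℕ)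
        ∈ (tri (m - 1)).filter fun x => 2 ^ (K + 2) ∣ 2 * n + x.2 + x.1 := by
      simp only [Finset.mem_filter, mem_tri]
      constructor
      · omega
      · show 2 ^ (K + 2) ∣ 2 * n + i₀ + (s₀ - i₀)
        rw [show 2 * n + i₀ + (s₀ - i₀) = 2 * n + s₀ by omega, hq2]
        refine ⟨c + 1, ?_⟩
        rw [show 2 * q * (c + 1) = 2 * (q * c) + 2 * q by ring]
        omega
    unfold dcnt
    exact Finset.card_pos.2 ⟨_, hmem⟩

lemma char {K m n : ℕ} (h1 : 2 ^ K < m) (h2 : m ≤ 2 ^ (K + 1)) :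
    (∀ e, 1 ≤ e → dcnt (m - 1) (2 ^ e) n = dcnt (m - 1) (2 ^ e) 0) ↔
      (n % 2 ^ (K + 1) = 0 ∨ (n + m) % 2 ^ (K + 1) = 0) := by
  constructor
  · intro hall
    by_contra hcon
    push_neg at hcon
    obtain ⟨e, he, hlt⟩ := neces h1 h2 hcon.1 hcon.2
    rw [hall e he] at hlt
    exact lt_irrefl _ hlt
  · intro hcase e he
    rcases le_or_gt e (K + 1) with heK | heK
    · rcases hcase with hc | hc
      · exact dcnt_congr_of_dvd
          (Dvd.dvd.mul_left (dvd_trans (pow_dvd_pow 2 heK) (Nat.dvd_of_mod_eq_zero hc)) 2)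
      · apply dcnt_reflect (by omega)
        rw [show 2 * n + 2 * m = 2 * (n + m) by ring]
        exact Dvd.dvd.mul_left (dvd_trans (pow_dvd_pow 2 heK) (Nat.dvd_of_mod_eq_zero hc)) 2
    · have hq2 : (2:ℕ) ^ (K + 2) = 2 * 2 ^ (K + 1) := by rw [pow_succ]; ring
      have h0 : dcnt (m - 1) (2 ^ e) 0 = 0 := by
        apply dcnt_eq_zero
        have hle : (2:ℕ) ^ (K + 2) ≤ 2 ^ e := pow_le_pow_right₀ (by norm_num) (by omega)
        omega
      have hn0 : dcnt (m - 1) (2 ^ e) n = 0 := by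
        apply vanish_high h1 h2 (by omega)
        rcases hcase with hc | hc
        · left
          obtain ⟨k, hk⟩ := Nat.dvd_of_mod_eq_zero hc
          exact ⟨k, by rw [hk, hq2]; ring⟩
        · right
          obtain ⟨k, hk⟩ := Nat.dvd_of_mod_eq_zero hc
          refine ⟨k, ?_⟩
          rw [show 2 * n + 2 * m = 2 * (n + m) by ring, hk, hq2]; ring
      rw [h0, hn0]

lemma dcnt_zero_eq (L q : ℕ) :
    dcnt L q 0 = ((tri L).filter fun x => q ∣ x.2 + x.1).card := by
  unfold dcnt
  congr 1
  apply Finset.filter_congr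
  intro x _
  rw [show 2 * 0 + x.2 + x.1 = x.2 + x.1 by ring]

lemma dcnt_high_zero {L q n : ℕ} (h : 2 * n + 2 * L < q) : dcnt L q n = 0 := dcnt_eq_zero h

lemma fact_sum (L B : ℕ) (f : (_ : ℕ) × ℕ → ℕ) (hf : ∀ x ∈ tri L, f x ≠ 0 ∧ f x ≤ B)
    (p : ℕ) (hp : p.Prime) :
    (∏ x ∈ tri L, f x).factorization p
      = ∑ e ∈ Finset.Icc 1 B, ((tri L).filter fun x => p ^ e ∣ f x).card := by
  rw [Nat.factorization_prod (fun x hx => (hf x hx).1)]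
  rw [Finsupp.finset_sum_apply]
  have hterm : ∀ x ∈ tri L, (f x).factorization p
      = ∑ e ∈ Finset.Icc 1 B, if p ^ e ∣ f x then 1 else 0 := by
    intro x hx
    rw [Nat.factorization_eq_card_pow_dvd _ hp,
      Nat.Ico_filter_pow_dvd_eq hp (hf x hx).1
        (le_trans (le_trans (hf x hx).2 (Nat.le_of_lt (Nat.lt_two_pow_self)))
          (Nat.pow_le_pow_left hp.two_le B))]
    rw [Finset.card_filter]
  rw [Finset.sum_congr rfl hterm, Finset.sum_comm]
  apply Finset.sum_congr rfl
  intro e _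
  rw [Finset.card_filter]

theorem stmt13 (K m n : ℕ) (h1 : 2 ^ K < m) (h2 : m ≤ 2 ^ (K + 1)) :
    ∃ z : ℤ, (∏ j ∈ Finset.Icc 1 (m - 1), ∏ i ∈ Finset.Icc 1 j,
        ((2 * n + i + j : ℚ) / (i + j : ℚ))) = (z : ℚ) ∧
      (Odd z ↔ (n % 2 ^ (K + 1) = 0 ∨ (n + m) % 2 ^ (K + 1) = 0)) := by
  have hm2 : 2 ≤ m := by have := Nat.one_le_two_pow (n := K); omega
  set L := m - 1 with hLdef
  set Nn := ∏ x ∈ tri L, (2 * n + x.2 + x.1) with hNn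
  set Dn := ∏ x ∈ tri L, (x.2 + x.1) with hDn
  set B := 2 * n + 2 * m with hBdef
  have hN0 : ∀ x ∈ tri L, 2 * n + x.2 + x.1 ≠ 0 := fun x hx => by rw [mem_tri] at hx; omega
  have hD0 : ∀ x ∈ tri L, x.2 + x.1 ≠ 0 := fun x hx => by rw [mem_tri] at hx; omega
  have hNb : ∀ x ∈ tri L, 2 * n + x.2 + x.1 ≤ B := fun x hx => by rw [mem_tri] at hx; omega
  have hDb : ∀ x ∈ tri L, x.2 + x.1 ≤ B := fun x hx => by rw [mem_tri] at hx; omega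
  have hNne : Nn ≠ 0 := Finset.prod_ne_zero_iff.2 hN0
  have hDne : Dn ≠ 0 := Finset.prod_ne_zero_iff.2 hD0
  have hNfact : ∀ p : ℕ, p.Prime →
      Nn.factorization p = ∑ e ∈ Finset.Icc 1 B, dcnt L (p ^ e) n := by
    intro p hp
    rw [hNn, fact_sum L B _ (fun x hx => ⟨hN0 x hx, hNb x hx⟩) p hp]
    apply Finset.sum_congr rfl
    intro e _
    rfl
  have hDfact : ∀ p : ℕ, p.Prime →
      Dn.factorization p = ∑ e ∈ Finset.Icc 1 B, dcnt L (p ^ e) 0 := by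
    intro p hp
    rw [hDn, fact_sum L B _ (fun x hx => ⟨hD0 x hx, hDb x hx⟩) p hp]
    apply Finset.sum_congr rfl
    intro e _
    rw [dcnt_zero_eq]
  have hfle : ∀ p, Dn.factorization p ≤ Nn.factorization p := by
    intro p
    by_cases hp : p.Prime
    · rw [hNfact p hp, hDfact p hp]
      apply Finset.sum_le_sum
      intro e _
      exact key_le (p ^ e) n (Nat.pow_pos hp.pos) L
    · rw [Nat.factorization_eq_zero_of_not_prime _ hp,
        Nat.factorization_eq_zero_of_not_prime _ hp]
  have hdvd : Dn ∣ Nn := by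
    refine (Nat.factorization_le_iff_dvd hDne hNne).1 ?_
    intro p
    exact hfle p
  obtain ⟨w, hw⟩ := hdvd
  have hwq : w = Nn / Dn := by rw [hw, Nat.mul_div_cancel_left w (Nat.pos_of_ne_zero hDne)]
  refine ⟨(w : ℤ), ?_, ?_⟩
  · rw [Int.cast_natCast, hwq, Nat.cast_div_charZero ⟨w, hw⟩]
    rw [Finset.prod_sigma' (Finset.Icc 1 (m - 1)) (fun j => Finset.Icc 1 j)
      (fun j i => ((2 * n + i + j : ℚ) / (i + j : ℚ)))]
    rw [show (Finset.Icc 1 (m - 1)).sigma (fun j => Finset.Icc 1 j) = tri L from rfl]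
    rw [Finset.prod_div_distrib]
    congr 1
    · rw [hNn, Nat.cast_prod]
      apply Finset.prod_congr rfl
      intro x _
      push_cast
      ring
    · rw [hDn, Nat.cast_prod]
      apply Finset.prod_congr rfl
      intro x _
      push_cast
      ring
  · have hzne : Nn / Dn ≠ 0 := by
      intro h0
      rw [← hwq] at h0
      rw [h0, mul_zero] at hw
      exact hNne hw
    rw [Int.odd_coe_nat, hwq, ← Nat.not_even_iff_odd, even_iff_two_dvd]
    have hfac0 : ¬ (2 ∣ Nn / Dn) ↔ (Nn / Dn).factorization 2 = 0 := by
      rw [Nat.factorization_eq_zero_iff]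
      simp [Nat.prime_two, hzne]
    rw [hfac0, Nat.factorization_div ⟨w, hw⟩, Finsupp.tsub_apply]
    rw [hNfact 2 Nat.prime_two, hDfact 2 Nat.prime_two]
    have hkey : ∀ e ∈ Finset.Icc 1 B, dcnt L (2 ^ e) 0 ≤ dcnt L (2 ^ e) n :=
      fun e _ => key_le (2 ^ e) n (Nat.pow_pos (by norm_num)) L
    have hs := Finset.sum_le_sum hkey
    have hiff1 : (∑ e ∈ Finset.Icc 1 B, dcnt L (2 ^ e) n)
        - (∑ e ∈ Finset.Icc 1 B, dcnt L (2 ^ e) 0) = 0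
        ↔ ∀ e ∈ Finset.Icc 1 B, dcnt L (2 ^ e) 0 = dcnt L (2 ^ e) n := by
      constructor
      · intro h
        exact (Finset.sum_eq_sum_iff_of_le hkey).1 (by omega)
      · intro h
        rw [Finset.sum_congr rfl h]
        omega
    rw [hiff1, ← char h1 h2]
    constructor
    · intro h e he
      rcases le_or_gt e B with heB | heB
      · exact (h e (Finset.mem_Icc.2 ⟨he, heB⟩)).symm
      · have hgt : 2 * n + 2 * L < 2 ^ e := by
          have hb1 : B < 2 ^ B := Nat.lt_two_pow_self
          have hb2 : (2:ℕ) ^ B ≤ 2 ^ e := Nat.pow_le_pow_right (by norm_num) (by omega)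
          omega
        rw [dcnt_eq_zero hgt, dcnt_eq_zero (show 2 * 0 + 2 * L < 2 ^ e by omega)]
    · intro h e hemem
      rw [Finset.mem_Icc] at hemem
      exact (h e hemem.1).symm
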